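/- Let f : ℝ≥0 → ℝ≥0 be defined by f(x) = x² if x is irrational and f(x) = c²·x² if x is rational, where c is a fixed positive rational with c ≠ 1. Then for all x, y ∈ ℝ≥0 and all positive rational z, if f(x+z) − f(x) = f(y+z) − f(y) then x = y. -/

import Mathlib

theorem costas_indicator_costas_property
    (c : ℚ) (hc : 0 < c) (hc1 : c ≠ 1) (f : ℝ → ℝ)
    (hfq : ∀ x : ℝ, ¬ Irrational x → f x = (c : ℝ)^2 * x^2)
    (hfi : ∀ x : ℝ, Irrational x → f x = x^2) :
    ∀ x ∈ Set.Ici (0 : ℝ), ∀ y ∈ Set.Ici (0 : ℝ), ∀ z : ℚ, 0 < z →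
      f (x + z) - f x = f (y + z) - f y → x = y := by
  intro x _ y _ z hz heq
  have hz0 : (z : ℝ) ≠ 0 := by exact_mod_cast hz.ne'
  by_cases hxi : Irrational x <;> by_cases hyi : Irrational y
  · rw [hfi _ hxi, hfi _ hyi, hfi _ (hxi.add_ratCast z), hfi _ (hyi.add_ratCast z)] at heq
    have h2 : 2*(z:ℝ)*x = 2*(z:ℝ)*y := by linear_combination heq
    exact mul_left_cancel₀ (by positivity) h2
  · exfalso
    obtain ⟨q, hq⟩ := not_not.mp hyi
    rw [hfi _ hxi, hfi _ (hxi.add_ratCast z), hfq _ hyi,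
        hfq _ (by rw [← hq]; exact not_not.mpr ⟨q + z, by push_cast; ring⟩)] at heq
    refine hxi ⟨(c^2*(2*q*z+z^2) - z^2)/(2*z), ?_⟩
    push_cast
    rw [div_eq_iff (by positivity)]
    rw [← hq] at heq
    nlinarith [heq]
  · exfalso
    obtain ⟨q, hq⟩ := not_not.mp hxi
    rw [hfi _ hyi, hfi _ (hyi.add_ratCast z), hfq _ hxi,
        hfq _ (by rw [← hq]; exact not_not.mpr ⟨q + z, by push_cast; ring⟩)] at heq
    refine hyi ⟨(c^2*(2*q*z+z^2) - z^2)/(2*z), ?_⟩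
    push_cast
    rw [div_eq_iff (by positivity)]
    rw [← hq] at heq
    nlinarith [heq]
  · rw [hfq _ hxi, hfq _ hyi] at heq
    obtain ⟨q, hq⟩ := not_not.mp hxi
    obtain ⟨r, hr⟩ := not_not.mp hyi
    rw [hfq _ (by rw [← hq]; exact not_not.mpr ⟨q + z, by push_cast; ring⟩),
        hfq _ (by rw [← hr]; exact not_not.mpr ⟨r + z, by push_cast; ring⟩)] at heq
    have hc0 : (0:ℝ) < (c:ℝ) := by exact_mod_cast hc
    have h2 : 2*(z:ℝ)*(c:ℝ)^2*x = 2*(z:ℝ)*(c:ℝ)^2*y := by linear_combination heq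
    exact mul_left_cancel₀ (by positivity) h2
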